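/- If φ is an automorphism of the unit disc, then the composition operator C_φ on the Bloch space satisfies 1 ≤ ‖C_φ‖ ≤ 1 + (1/2) log((1+|φ(0)|)/(1-|φ(0)|)). -/

import Mathlib

open Complex Metric Set Filter MeasureTheory Finset

noncomputable section

/-- The open unit disc in ℂ. -/
def D1 : Set ℂ := Metric.ball 0 1

/-- Analytic (holomorphic) on the open unit disc. -/
def AnalyticOnD (f : ℂ → ℂ) : Prop := DifferentiableOn ℂ f D1

/-- Bloch seminorm. -/
def blochSemi (f : ℂ → ℂ) : ℝ := ⨆ z : D1, (1 - ‖(z : ℂ)‖ ^ 2) * ‖deriv f (z : ℂ)‖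

/-- Bloch norm. -/
def blochNorm (f : ℂ → ℂ) : ℝ := ‖f 0‖ + blochSemi f

/-- Membership in the Bloch space. -/
def InBloch (f : ℂ → ℂ) : Prop :=
  AnalyticOnD f ∧ ∃ C, ∀ z ∈ D1, (1 - ‖z‖ ^ 2) * ‖deriv f z‖ ≤ C

/-- Sup norm over the unit disc. -/
def supNormD (f : ℂ → ℂ) : ℝ := ⨆ z : D1, ‖f (z : ℂ)‖

/-- Weighted composition operator uC_φ. -/
def wco (u φ : ℂ → ℂ) (f : ℂ → ℂ) : ℂ → ℂ := fun z => u z * f (φ z)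

/-- Multiplication operator M_u. -/
def mult (u : ℂ → ℂ) (f : ℂ → ℂ) : ℂ → ℂ := fun z => u z * f z

/-- The weight u_{(n)} = ∏_{j=0}^{n-1} u ∘ φ_j. -/
def wprod (u φ : ℂ → ℂ) (n : ℕ) : ℂ → ℂ := fun z => ∏ j ∈ Finset.range n, u (φ^[j] z)

/-- Boundedness of an operator on the Bloch space. -/
def BddOnBloch (T : (ℂ → ℂ) → (ℂ → ℂ)) : Prop :=
  ∃ C, ∀ f, InBloch f → InBloch (T f) ∧ blochNorm (T f) ≤ C * blochNorm f

/-- Operator norm on the Bloch space. -/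
def opNormB (T : (ℂ → ℂ) → (ℂ → ℂ)) : ℝ :=
  sInf {C : ℝ | 0 ≤ C ∧ ∀ f, InBloch f → blochNorm (T f) ≤ C * blochNorm f}

/-- Invertibility of an operator on the Bloch space (bounded two-sided inverse). -/
def InvertibleOnBloch (T : (ℂ → ℂ) → (ℂ → ℂ)) : Prop :=
  BddOnBloch T ∧ ∃ S, BddOnBloch S ∧
    ∀ f, InBloch f → Set.EqOn (S (T f)) f D1 ∧ Set.EqOn (T (S f)) f D1

/-- Spectrum of an operator acting on the Bloch space. -/
def blochSpectrum (T : (ℂ → ℂ) → (ℂ → ℂ)) : Set ℂ :=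
  {lam | ¬ InvertibleOnBloch (fun f z => lam * f z - T f z)}

/-- Automorphism of the unit disc (Möbius form). -/
def IsDiscAuto (φ : ℂ → ℂ) : Prop :=
  ∃ lam a : ℂ, ‖lam‖ = 1 ∧ a ∈ D1 ∧ ∀ z, φ z = lam * (a - z) / (1 - (starRingEnd ℂ) a * z)

/-- Hyperbolic distance on the unit disc. -/
def hypDist (z w : ℂ) : ℝ :=
  (1 / 2) * Real.log ((1 + ‖(z - w) / (1 - (starRingEnd ℂ) z * w)‖) /
    (1 - ‖(z - w) / (1 - (starRingEnd ℂ) z * w)‖))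

/-- The disc algebra A(𝔻). -/
def InDiscAlgebra (u : ℂ → ℂ) : Prop :=
  ContinuousOn u (Metric.closedBall 0 1) ∧ AnalyticOnD u

/-- u is bounded away from zero on the unit disc. -/
def BoundedAwayFromZero (u : ℂ → ℂ) : Prop := ∃ δ > 0, ∀ z ∈ D1, δ ≤ ‖u z‖

/-- Parabolic automorphism with unique fixed point a on the unit circle (φ'(a)=1). -/
def IsParabolicAuto (φ : ℂ → ℂ) (a : ℂ) : Prop :=
  IsDiscAuto φ ∧ ‖a‖ = 1 ∧ φ a = a ∧ deriv φ a = 1 ∧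
    ∀ w, ‖w‖ ≤ 1 → φ w = w → w = a

/-- Hyperbolic automorphism with attractive fixed point a and repulsive fixed point b. -/
def IsHyperbolicAuto (φ : ℂ → ℂ) (a b : ℂ) : Prop :=
  IsDiscAuto φ ∧ ‖a‖ = 1 ∧ ‖b‖ = 1 ∧ a ≠ b ∧ φ a = a ∧ φ b = b ∧
    ∃ μ : ℝ, 0 < μ ∧ μ < 1 ∧ deriv φ a = (μ : ℂ)

/-- Square of the Dirichlet norm (normalized area measure on 𝔻). -/
def dirichletNormSq (f : ℂ → ℂ) : ℝ :=
  ‖f 0‖ ^ 2 + (1 / Real.pi) * ∫ z in D1, ‖deriv f z‖ ^ 2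

/-- Dirichlet norm. -/
def dirichletNorm (f : ℂ → ℂ) : ℝ := Real.sqrt (dirichletNormSq f)

/-- Membership in the Dirichlet space. -/
def InDirichlet (f : ℂ → ℂ) : Prop :=
  AnalyticOnD f ∧ MeasureTheory.IntegrableOn (fun z => ‖deriv f z‖ ^ 2) D1

/-- Boundedness of an operator on the Dirichlet space. -/
def BddOnDirichlet (T : (ℂ → ℂ) → (ℂ → ℂ)) : Prop :=
  ∃ C, ∀ f, InDirichlet f → InDirichlet (T f) ∧ dirichletNorm (T f) ≤ C * dirichletNorm f

/-- Operator norm on the Dirichlet space. -/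
def opNormDir (T : (ℂ → ℂ) → (ℂ → ℂ)) : ℝ :=
  sInf {C : ℝ | 0 ≤ C ∧ ∀ f, InDirichlet f → dirichletNorm (T f) ≤ C * dirichletNorm f}

/-- Invertibility of an operator on the Dirichlet space. -/
def InvertibleOnDirichlet (T : (ℂ → ℂ) → (ℂ → ℂ)) : Prop :=
  BddOnDirichlet T ∧ ∃ S, BddOnDirichlet S ∧
    ∀ f, InDirichlet f → Set.EqOn (S (T f)) f D1 ∧ Set.EqOn (T (S f)) f D1

/-- Spectrum of an operator on the Dirichlet space. -/
def dirichletSpectrum (T : (ℂ → ℂ) → (ℂ → ℂ)) : Set ℂ :=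
  {lam | ¬ InvertibleOnDirichlet (fun f z => lam * f z - T f z)}

/-- Operator norm of M_{u'} : B → H^∞_{v₁}. -/
def opNormBtoHv1 (u : ℂ → ℂ) : ℝ :=
  sInf {C : ℝ | 0 ≤ C ∧ ∀ f, InBloch f → ∀ z ∈ D1,
    (1 - ‖z‖ ^ 2) * ‖deriv u z * f z‖ ≤ C * blochNorm f}

/-- Operator norm of M_{u'} : 𝒟 → A². -/
def opNormDtoA2 (u : ℂ → ℂ) : ℝ :=
  sInf {C : ℝ | 0 ≤ C ∧ ∀ f, InDirichlet f →
    Real.sqrt ((1 / Real.pi) * ∫ z in D1, ‖deriv u z * f z‖ ^ 2) ≤ C * dirichletNorm f}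

/-- The logarithmic weight log(e/(1-|z|²)). -/
def logWeight (z : ℂ) : ℝ := Real.log (Real.exp 1 / (1 - ‖z‖ ^ 2))

/-- Characterization of multipliers of the Bloch space: u ∈ H^∞ and the log condition. -/
def MultBChar (u : ℂ → ℂ) : Prop :=
  (∃ M, ∀ z ∈ D1, ‖u z‖ ≤ M) ∧
  (∃ M, ∀ z ∈ D1, (1 - ‖z‖ ^ 2) * ‖deriv u z‖ * logWeight z ≤ M)

lemma mem_D1_iff {z : ℂ} : z ∈ D1 ↔ ‖z‖ < 1 := by
  simp [D1, Metric.mem_ball, dist_zero_right]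

lemma isOpen_D1 : IsOpen D1 := Metric.isOpen_ball

instance : Nonempty D1 := ⟨⟨0, by simp [mem_D1_iff]⟩⟩

lemma normSq_key (a z : ℂ) :
    normSq (1 - (starRingEnd ℂ) a * z) - normSq (a - z)
      = (1 - normSq a) * (1 - normSq z) := by
  simp only [normSq_apply, sub_re, sub_im, mul_re, mul_im, one_re, one_im,
    Complex.conj_re, Complex.conj_im]
  ring

lemma auto_key {lam a : ℂ} (hlam : ‖lam‖ = 1) (ha : ‖a‖ < 1) {z : ℂ} (hz : ‖z‖ < 1) :
    HasDerivAt (fun z => lam * (a - z) / (1 - (starRingEnd ℂ) a * z))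
      (lam * ((normSq a : ℂ) - 1) / (1 - (starRingEnd ℂ) a * z) ^ 2) z ∧
    ‖lam * (a - z) / (1 - (starRingEnd ℂ) a * z)‖ < 1 ∧
    (1 - ‖z‖ ^ 2) * ‖lam * ((normSq a : ℂ) - 1) / (1 - (starRingEnd ℂ) a * z) ^ 2‖
      = 1 - ‖lam * (a - z) / (1 - (starRingEnd ℂ) a * z)‖ ^ 2 := by
  have hden : (1 : ℂ) - (starRingEnd ℂ) a * z ≠ 0 := by
    intro h
    have h1 : (1 : ℂ) = (starRingEnd ℂ) a * z := by linear_combination h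
    have := congrArg norm h1
    rw [norm_mul, norm_one, RCLike.norm_conj] at this
    nlinarith [norm_nonneg a, norm_nonneg z]
  have hU : 0 < normSq (1 - (starRingEnd ℂ) a * z) := normSq_pos.2 hden
  have hkey := normSq_key a z
  have ha2 : normSq a < 1 := by rw [Complex.normSq_eq_norm_sq]; nlinarith [norm_nonneg a]
  have hz2 : normSq z < 1 := by rw [Complex.normSq_eq_norm_sq]; nlinarith [norm_nonneg z]
  have hAU : normSq (a - z) < normSq (1 - (starRingEnd ℂ) a * z) := by nlinarith
  have hlam2 : normSq lam = 1 := by rw [Complex.normSq_eq_norm_sq, hlam]; norm_num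
  have hD : HasDerivAt (fun z => lam * (a - z) / (1 - (starRingEnd ℂ) a * z))
      (lam * ((normSq a : ℂ) - 1) / (1 - (starRingEnd ℂ) a * z) ^ 2) z := by
    have hN : HasDerivAt (fun z : ℂ => lam * (a - z)) (lam * (-1)) z :=
      ((hasDerivAt_id z).const_sub a).const_mul lam
    have hDen : HasDerivAt (fun z : ℂ => 1 - (starRingEnd ℂ) a * z)
        (-((starRingEnd ℂ) a * 1)) z :=
      ((hasDerivAt_id z).const_mul ((starRingEnd ℂ) a)).const_sub 1
    have h := hN.div hDen hden
    have hconj : (starRingEnd ℂ) a * a = (normSq a : ℂ) := by rw [mul_comm, mul_conj]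
    have heq : lam * ((normSq a : ℂ) - 1) / (1 - (starRingEnd ℂ) a * z) ^ 2 =
        (lam * (-1) * (1 - (starRingEnd ℂ) a * z) - lam * (a - z) * -((starRingEnd ℂ) a * 1)) /
          (1 - (starRingEnd ℂ) a * z) ^ 2 := by
      congr 1
      linear_combination (-lam) * hconj
    rw [heq]; exact h
  have hnormφ : ‖lam * (a - z) / (1 - (starRingEnd ℂ) a * z)‖ ^ 2
      = normSq (a - z) / normSq (1 - (starRingEnd ℂ) a * z) := by
    rw [← Complex.normSq_eq_norm_sq, normSq_div, normSq_mul, hlam2, one_mul]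
  have hφlt : ‖lam * (a - z) / (1 - (starRingEnd ℂ) a * z)‖ < 1 := by
    have hsq : ‖lam * (a - z) / (1 - (starRingEnd ℂ) a * z)‖ ^ 2 < 1 := by
      rw [hnormφ, div_lt_one hU]; exact hAU
    nlinarith [norm_nonneg (lam * (a - z) / (1 - (starRingEnd ℂ) a * z))]
  refine ⟨hD, hφlt, ?_⟩
  have hcast : ((normSq a : ℂ) - 1) = ((normSq a - 1 : ℝ) : ℂ) := by push_cast; ring
  have hnormD : ‖lam * ((normSq a : ℂ) - 1) / (1 - (starRingEnd ℂ) a * z) ^ 2‖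
      = (1 - normSq a) / normSq (1 - (starRingEnd ℂ) a * z) := by
    rw [norm_div, norm_mul, hlam, one_mul, hcast, Complex.norm_real, Real.norm_eq_abs,
      abs_of_nonpos (by linarith), norm_pow, ← Complex.normSq_eq_norm_sq]
    ring
  rw [hnormD, hnormφ, ← Complex.normSq_eq_norm_sq z]
  field_simp
  linear_combination (-1:ℝ) * hkey

lemma growth {f : ℂ → ℂ} (hf : DifferentiableOn ℂ f D1) {s : ℝ}
    (hs : ∀ z ∈ D1, (1 - ‖z‖ ^ 2) * ‖deriv f z‖ ≤ s) {w : ℂ} (hw : w ∈ D1) :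
    ‖f w‖ ≤ ‖f 0‖ + s * ((1 / 2) * Real.log ((1 + ‖w‖) / (1 - ‖w‖))) := by
  set r := ‖w‖ with hrdef
  have hr : r < 1 := mem_D1_iff.1 hw
  have hr0 : 0 ≤ r := norm_nonneg w
  have huIcc : Set.uIcc (0:ℝ) 1 = Set.Icc 0 1 := Set.uIcc_of_le zero_le_one
  have hmem : ∀ t ∈ Set.Icc (0:ℝ) 1, t • w ∈ D1 := by
    intro t ht
    rw [mem_D1_iff, norm_smul, Real.norm_eq_abs, _root_.abs_of_nonneg ht.1]
    nlinarith [ht.1, ht.2, hr0, hr, mul_nonneg ht.1 hr0]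
  have hpos : ∀ t ∈ Set.Icc (0:ℝ) 1, 0 < 1 - t ^ 2 * r ^ 2 := by
    intro t ht
    have htr : t * r ≤ r := by nlinarith [ht.1, ht.2, hr0]
    nlinarith [mul_nonneg ht.1 hr0, htr, hr]
  have hg : ∀ t ∈ Set.uIcc (0:ℝ) 1,
      HasDerivAt (fun t : ℝ => f (t • w)) (w • deriv f (t • w)) t := by
    intro t ht
    rw [huIcc] at ht
    have hdf : HasDerivAt f (deriv f (t • w)) (t • w) :=
      (hf.differentiableAt (isOpen_D1.mem_nhds (hmem t ht))).hasDerivAt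
    have hc : HasDerivAt (fun t : ℝ => t • w) ((1:ℝ) • w) t := (hasDerivAt_id t).smul_const w
    have := HasDerivAt.scomp t hdf hc
    rw [one_smul] at this; exact this
  have hcontd : ContinuousOn (deriv f) D1 :=
    ((hf.analyticOnNhd isOpen_D1).deriv).continuousOn
  have hcsmul : Continuous fun t : ℝ => t • w := continuous_id.smul continuous_const
  have hcont' : ContinuousOn (fun t : ℝ => w • deriv f (t • w)) (Set.Icc 0 1) :=
    (hcontd.comp hcsmul.continuousOn hmem).const_smul w
  have hint : IntervalIntegrable (fun t : ℝ => w • deriv f (t • w)) volume 0 1 := by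
    apply ContinuousOn.intervalIntegrable; rwa [huIcc]
  have hFTC := intervalIntegral.integral_eq_sub_of_hasDerivAt hg hint
  simp only [one_smul, zero_smul] at hFTC
  -- the bound function
  set b : ℝ → ℝ := fun t => s * r / (1 - t ^ 2 * r ^ 2) with hbdef
  have hs0 : 0 ≤ s := by
    have h0 := hs 0 (by simp [mem_D1_iff])
    norm_num at h0
    exact le_trans (norm_nonneg _) h0
  have hbound : ∀ t ∈ Set.Icc (0:ℝ) 1, ‖w • deriv f (t • w)‖ ≤ b t := by
    intro t ht
    have h1 := hpos t ht
    have h2 := hs (t • w) (hmem t ht)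
    have h3 : ‖t • w‖ ^ 2 = t ^ 2 * r ^ 2 := by
      rw [norm_smul, Real.norm_eq_abs, _root_.abs_of_nonneg ht.1, mul_pow]
    rw [h3] at h2
    rw [norm_smul, hbdef]
    have h4 : ‖deriv f (t • w)‖ ≤ s / (1 - t ^ 2 * r ^ 2) := by
      rw [le_div_iff₀ h1]; linarith [h2]
    calc ‖w‖ * ‖deriv f (t • w)‖ ≤ r * (s / (1 - t ^ 2 * r ^ 2)) := by
          apply mul_le_mul_of_nonneg_left h4 hr0
      _ = s * r / (1 - t ^ 2 * r ^ 2) := by ring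
  have hbcont : ContinuousOn b (Set.Icc 0 1) := by
    apply ContinuousOn.div continuousOn_const (by fun_prop)
    intro t ht; exact ne_of_gt (hpos t ht)
  have hbint : IntervalIntegrable b volume 0 1 := by
    apply ContinuousOn.intervalIntegrable; rwa [huIcc]
  have hnint : IntervalIntegrable (fun t : ℝ => ‖w • deriv f (t • w)‖) volume 0 1 := hint.norm
  have hstep1 : ‖f w - f 0‖ ≤ ∫ t in (0:ℝ)..1, b t := by
    rw [← hFTC]
    refine le_trans (intervalIntegral.norm_integral_le_integral_norm zero_le_one) ?_
    apply intervalIntegral.integral_mono_on zero_le_one hnint hbint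
    exact hbound
  -- compute the integral of b
  have hH : ∀ t ∈ Set.uIcc (0:ℝ) 1,
      HasDerivAt (fun t => s / 2 * (Real.log (1 + t * r) - Real.log (1 - t * r))) (b t) t := by
    intro t ht
    rw [huIcc] at ht
    have hp1 : (0:ℝ) < 1 + t * r := by nlinarith [ht.1, ht.2]
    have hp2 : (0:ℝ) < 1 - t * r := by nlinarith [ht.1, ht.2]
    have l1 : HasDerivAt (fun t : ℝ => Real.log (1 + t * r)) ((1 + t * r)⁻¹ * r) t := by
      have inner : HasDerivAt (fun t : ℝ => 1 + t * r) r t := by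
        simpa using ((hasDerivAt_id t).mul_const r).const_add 1
      exact (Real.hasDerivAt_log (ne_of_gt hp1)).comp t inner
    have l2 : HasDerivAt (fun t : ℝ => Real.log (1 - t * r)) ((1 - t * r)⁻¹ * (-r)) t := by
      have inner : HasDerivAt (fun t : ℝ => 1 - t * r) (-r) t := by
        simpa using ((hasDerivAt_id t).mul_const r).const_sub 1
      exact (Real.hasDerivAt_log (ne_of_gt hp2)).comp t inner
    have := (l1.sub l2).const_mul (s / 2)
    convert this using 1
    · rfl
    · rfl
    · rfl
    have h1 : (0:ℝ) < 1 - t ^ 2 * r ^ 2 := hpos t ht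
    rw [hbdef]
    have hfact : 1 - t ^ 2 * r ^ 2 = (1 + t * r) * (1 - t * r) := by ring
    beta_reduce; rw [hfact]
    rw [div_eq_iff (mul_ne_zero (ne_of_gt hp1) (ne_of_gt hp2))]
    have hu := mul_inv_cancel₀ (ne_of_gt hp1)
    have hv := mul_inv_cancel₀ (ne_of_gt hp2)
    linear_combination (-(s * r / 2 * (1 - t * r))) * hu - (s * r / 2 * (1 + t * r)) * hv
  have hbI : ∫ t in (0:ℝ)..1, b t = s * ((1 / 2) * Real.log ((1 + r) / (1 - r))) := by
    rw [intervalIntegral.integral_eq_sub_of_hasDerivAt hH hbint]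
    have hp1 : (0:ℝ) < 1 + r := by linarith
    have hp2 : (0:ℝ) < 1 - r := by linarith
    simp only [one_mul, zero_mul]
    rw [Real.log_div (ne_of_gt hp1) (ne_of_gt hp2)]
    norm_num
    ring
  calc ‖f w‖ ≤ ‖f 0‖ + ‖f w - f 0‖ := by
        have := norm_sub_norm_le (f w) (f 0)
        linarith [norm_sub_norm_le (f w) (f 0)]
    _ ≤ ‖f 0‖ + s * ((1 / 2) * Real.log ((1 + r) / (1 - r))) := by
        rw [← hbI]; linarith [hstep1]

/-- norm estimate for composition operators with automorphic symbol on B. -/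
theorem stmt_8 (φ : ℂ → ℂ) (hφ : IsDiscAuto φ) :
    1 ≤ opNormB (fun f => f ∘ φ) ∧
      opNormB (fun f => f ∘ φ) ≤ 1 + (1 / 2) * Real.log ((1 + ‖φ 0‖) / (1 - ‖φ 0‖)) := by
  obtain ⟨lam, a, hlam, haD, hφeq⟩ := hφ
  have ha : ‖a‖ < 1 := mem_D1_iff.1 haD
  have hφ0 : ‖φ 0‖ < 1 := by
    rw [hφeq 0]; exact (auto_key hlam ha (by simp)).2.1
  set L : ℝ := (1 / 2) * Real.log ((1 + ‖φ 0‖) / (1 - ‖φ 0‖)) with hLdef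
  have hL0 : 0 ≤ L := by
    apply mul_nonneg (by norm_num)
    apply Real.log_nonneg
    rw [le_div_iff₀ (by linarith)]
    nlinarith [norm_nonneg (φ 0)]
  have hmemset : (1 + L) ∈ {C : ℝ | 0 ≤ C ∧ ∀ f, InBloch f →
      blochNorm ((fun f => f ∘ φ) f) ≤ C * blochNorm f} := by
    constructor
    · linarith
    intro f hfB
    obtain ⟨hfd, C, hC⟩ := hfB
    set s := blochSemi f with hsdef
    have hbdd : BddAbove (Set.range fun z : D1 => (1 - ‖(z:ℂ)‖ ^ 2) * ‖deriv f (z:ℂ)‖) := by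
      refine ⟨C, ?_⟩; rintro x ⟨z, rfl⟩; exact hC z z.2
    have hle : ∀ z ∈ D1, (1 - ‖z‖ ^ 2) * ‖deriv f z‖ ≤ s := by
      intro z hz; exact le_ciSup hbdd ⟨z, hz⟩
    have hs0 : 0 ≤ s := by
      have h00 := hle 0 (by simp [mem_D1_iff])
      norm_num at h00
      exact le_trans (norm_nonneg _) h00
    have hkeyz : ∀ z ∈ D1, (1 - ‖z‖ ^ 2) * ‖deriv (f ∘ φ) z‖ ≤ s := by
      intro z hz
      have hz1 : ‖z‖ < 1 := mem_D1_iff.1 hz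
      obtain ⟨hDφ, hφz, hid⟩ := auto_key hlam ha hz1
      have hφfun : φ = fun w => lam * (a - w) / (1 - (starRingEnd ℂ) a * w) := funext hφeq
      have hφzD : φ z ∈ D1 := by rw [mem_D1_iff, hφeq z]; exact hφz
      have hdf : HasDerivAt f (deriv f (φ z)) (φ z) :=
        (hfd.differentiableAt (isOpen_D1.mem_nhds hφzD)).hasDerivAt
      have hDφ' : HasDerivAt φ
          (lam * ((normSq a : ℂ) - 1) / (1 - (starRingEnd ℂ) a * z) ^ 2) z := by
        rw [hφfun]; exact hDφ
      have hcomp : HasDerivAt (f ∘ φ)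
          (deriv f (φ z) * (lam * ((normSq a : ℂ) - 1) / (1 - (starRingEnd ℂ) a * z) ^ 2)) z :=
        hdf.comp z hDφ'
      have hid' : (1 - ‖z‖ ^ 2) *
          ‖lam * ((normSq a : ℂ) - 1) / (1 - (starRingEnd ℂ) a * z) ^ 2‖ = 1 - ‖φ z‖ ^ 2 := by
        rw [hφeq z]; exact hid
      rw [hcomp.deriv, norm_mul]
      calc (1 - ‖z‖ ^ 2) * (‖deriv f (φ z)‖ *
              ‖lam * ((normSq a : ℂ) - 1) / (1 - (starRingEnd ℂ) a * z) ^ 2‖)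
          = ‖deriv f (φ z)‖ * ((1 - ‖z‖ ^ 2) *
              ‖lam * ((normSq a : ℂ) - 1) / (1 - (starRingEnd ℂ) a * z) ^ 2‖) := by ring
        _ = (1 - ‖φ z‖ ^ 2) * ‖deriv f (φ z)‖ := by rw [hid']; ring
        _ ≤ s := hle _ hφzD
    have hsemi : blochSemi (f ∘ φ) ≤ s := ciSup_le fun z => hkeyz z z.2
    have hval : ‖(f ∘ φ) 0‖ ≤ ‖f 0‖ + s * L := by
      have := growth hfd hle (w := φ 0) (mem_D1_iff.2 hφ0)
      rw [hLdef]
      simpa [Function.comp] using this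
    have hfn0 : 0 ≤ ‖f 0‖ := norm_nonneg _
    show blochNorm (f ∘ φ) ≤ (1 + L) * blochNorm f
    have e1 : blochNorm (f ∘ φ) = ‖(f ∘ φ) 0‖ + blochSemi (f ∘ φ) := rfl
    have e2 : blochNorm f = ‖f 0‖ + s := rfl
    rw [e1, e2]
    nlinarith [hsemi, hval, hs0, hL0, hfn0]
  have hbddBelow : BddBelow {C : ℝ | 0 ≤ C ∧ ∀ f, InBloch f →
      blochNorm ((fun f => f ∘ φ) f) ≤ C * blochNorm f} := ⟨0, fun C hC => hC.1⟩
  constructor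
  · apply le_csInf ⟨1 + L, hmemset⟩
    intro C hC
    have hconst : InBloch (fun _ => (1:ℂ)) := by
      refine ⟨differentiableOn_const 1, 0, ?_⟩
      intro z hz
      simp
    have h1 := hC.2 (fun _ => 1) hconst
    have hb1 : blochNorm (fun _ : ℂ => (1:ℂ)) = 1 := by
      have : blochSemi (fun _ : ℂ => (1:ℂ)) = 0 := by
        unfold blochSemi
        simp
      unfold blochNorm
      rw [this]
      simp
    have hb2 : blochNorm ((fun _ : ℂ => (1:ℂ)) ∘ φ) = 1 := by
      have hcomp : (fun _ : ℂ => (1:ℂ)) ∘ φ = fun _ : ℂ => (1:ℂ)  := rfl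
      rw [hcomp, hb1]
    rw [hb1, mul_one] at h1
    calc (1:ℝ) = blochNorm ((fun _ : ℂ => (1:ℂ)) ∘ φ) := hb2.symm
      _ ≤ C := h1
  · exact csInf_le hbddBelow hmemset
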